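/- If there exists a positive definite matrix D with D·A + Aᵀ·D negative definite, then every eigenvalue of A has strictly negative real part; in particular A is invertible. -/

import Mathlib

open Matrix

private lemma re_quad {n : ℕ} (M : Matrix (Fin n) (Fin n) ℝ) (v : Fin n → ℂ) :
    (star v ⬝ᵥ (M.map Complex.ofReal).mulVec v).re
      = (fun i => (v i).re) ⬝ᵥ M.mulVec (fun i => (v i).re)
        + (fun i => (v i).im) ⬝ᵥ M.mulVec (fun i => (v i).im) := by
  simp only [dotProduct, mulVec, Pi.star_apply, map_apply, Finset.mul_sum, Complex.re_sum]
  rw [← Finset.sum_add_distrib]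
  refine Finset.sum_congr rfl fun i _ => ?_
  simp only [Finset.mul_sum, Complex.re_sum, ← Finset.sum_add_distrib]
  refine Finset.sum_congr rfl fun j _ => ?_
  simp [Complex.mul_re, RCLike.star_def, Complex.conj_re, Complex.conj_im]

/-- If there exists a positive definite `D` with `D·A + Aᵀ·D` negative definite,
then every eigenvalue of `A` (over `ℂ`) has strictly negative real part; in
particular `A` is invertible. -/
theorem lyapunov_spectrum_neg_re {n : ℕ}
    (A D : Matrix (Fin n) (Fin n) ℝ) (hD : D.PosDef)
    (hneg : ∀ x : Fin n → ℝ, x ≠ 0 → x ⬝ᵥ (D * A + Aᵀ * D).mulVec x < 0) :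
    (∀ μ ∈ spectrum ℂ (A.map Complex.ofReal), μ.re < 0) ∧ IsUnit A := by
  have main : ∀ μ ∈ spectrum ℂ (A.map Complex.ofReal), μ.re < 0 := by
    intro μ hμ
    -- get an eigenvector
    rw [← AlgEquiv.spectrum_eq (Matrix.toLinAlgEquiv' (R := ℂ) (n := Fin n)),
      ← Module.End.hasEigenvalue_iff_mem_spectrum] at hμ
    obtain ⟨v, hv⟩ := hμ.exists_hasEigenvector
    have hv0 : v ≠ 0 := hv.2
    have hAv : (A.map Complex.ofReal).mulVec v = μ • v := by
      have := hv.apply_eq_smul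
      simpa [Matrix.toLinAlgEquiv'_apply] using this
    set Ac := A.map Complex.ofReal with hAc
    set Dc := D.map Complex.ofReal with hDc
    -- conjugation fact
    have hstar : Ac.mulVec (star v) = star (Ac.mulVec v) := by
      funext i
      simp only [mulVec, dotProduct, Pi.star_apply, hAc, map_apply, star_sum, star_mul',
        RCLike.star_def, Complex.conj_ofReal]
    have key : star v ⬝ᵥ ((D * A + Aᵀ * D).map Complex.ofReal).mulVec v
        = (μ + starRingEnd ℂ μ) * (star v ⬝ᵥ Dc.mulVec v) := by
      have hmap : (D * A + Aᵀ * D).map Complex.ofReal = Dc * Ac + Acᵀ * Dc := by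
        ext i j
        simp [hAc, hDc, Matrix.add_apply, Matrix.mul_apply, Matrix.map_apply,
          Matrix.transpose_apply]
      rw [hmap, add_mulVec, dotProduct_add, ← mulVec_mulVec, hAv, mulVec_smul,
        dotProduct_smul, ← mulVec_mulVec, dotProduct_mulVec (star v) Acᵀ,
        vecMul_transpose, hstar, hAv]
      have : star (μ • v) ⬝ᵥ Dc.mulVec v = starRingEnd ℂ μ * (star v ⬝ᵥ Dc.mulVec v) := by
        simp [star_smul, smul_dotProduct, smul_eq_mul, RCLike.star_def]
      rw [this, smul_eq_mul]; ring
    -- set real and imaginary parts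
    set x : Fin n → ℝ := fun i => (v i).re with hx
    set y : Fin n → ℝ := fun i => (v i).im with hy
    have hxy : x ≠ 0 ∨ y ≠ 0 := by
      by_contra h
      push_neg at h
      apply hv0
      funext i
      have hxi : (v i).re = 0 := congrFun h.1 i
      have hyi : (v i).im = 0 := congrFun h.2 i
      exact Complex.ext hxi hyi
    have hMle : ∀ z : Fin n → ℝ, z ⬝ᵥ (D * A + Aᵀ * D).mulVec z ≤ 0 := by
      intro z
      rcases eq_or_ne z 0 with rfl | hz
      · simp
      · exact (hneg z hz).le
    have hDle : ∀ z : Fin n → ℝ, 0 ≤ z ⬝ᵥ D.mulVec z := by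
      intro z
      rcases eq_or_ne z 0 with rfl | hz
      · simp
      · have := hD.dotProduct_mulVec_pos hz
        simpa using this.le
    have hQM : (star v ⬝ᵥ ((D * A + Aᵀ * D).map Complex.ofReal).mulVec v).re < 0 := by
      rw [re_quad]
      rcases hxy with h | h
      · have := hneg x h
        have := hMle y
        linarith
      · have := hneg y h
        have := hMle x
        linarith
    have hQD : 0 < (star v ⬝ᵥ Dc.mulVec v).re := by
      rw [hDc, re_quad]
      rcases hxy with h | h
      · have h1 := hD.dotProduct_mulVec_pos h
        have h2 := hDle y
        simp only [star_trivial] at h1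
        have h1' : 0 < x ⬝ᵥ D.mulVec x := by simpa using h1
        linarith
      · have h1 := hD.dotProduct_mulVec_pos h
        have h2 := hDle x
        have h1' : 0 < y ⬝ᵥ D.mulVec y := by simpa using h1
        linarith
    have hre : (star v ⬝ᵥ ((D * A + Aᵀ * D).map Complex.ofReal).mulVec v).re
        = 2 * μ.re * (star v ⬝ᵥ Dc.mulVec v).re := by
      rw [key, Complex.add_conj]
      simp [Complex.mul_re]
    rw [hre] at hQM
    nlinarith
  refine ⟨main, ?_⟩
  by_contra hA
  have hdet : A.det = 0 := by
    by_contra hd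
    exact hA ((Matrix.isUnit_iff_isUnit_det A).mpr (isUnit_iff_ne_zero.mpr hd))
  have h0 : (0 : ℂ) ∈ spectrum ℂ (A.map Complex.ofReal) := by
    rw [spectrum.zero_mem_iff]
    intro hU
    have := (Matrix.isUnit_iff_isUnit_det _).mp hU
    rw [show A.map Complex.ofReal = Complex.ofRealHom.mapMatrix A from rfl,
      ← RingHom.map_det Complex.ofRealHom] at this
    simp [hdet] at this
  have := main 0 h0
  simp at this
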